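/- Fix n ≥ 1, let p : 2^n → ℝ be a probability vector with all entries positive, let μ_p be the associated n-step Bernoulli measure on 2^ω, and let φ be a non-trivial n-block map. Then Avg(φ, μ_p, nk) = Avg(φ, μ_p, n) for every k ≥ 1, and Rate(φ, μ_p) = limsup_{m→∞} Avg(φ, μ_p, m) = Avg(φ, μ_p, n) = (1/n)·Σ_{σ∈2^n} p(σ)·|φ(σ)|. -/

import Mathlib

open Filter MeasureTheory

/-- The length-`m` initial segment of `X ∈ 2^ω`, as a finite binary string. -/
def seg (X : ℕ → Bool) (m : ℕ) : List Bool := (List.range m).map X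

/-- The cylinder `⟦σ⟧` of all sequences extending the string `σ`. -/
def cyl (σ : List Bool) : Set (ℕ → Bool) := {X | seg X σ.length = σ}

/-- `μ` is the `n`-step Bernoulli measure attached to the probability vector `p`
on `2^n`. -/
def IsNStepBernoulli (n : ℕ) (p : (Fin n → Bool) → ℝ)
    (μ : Measure (ℕ → Bool)) : Prop :=
  ∀ (k : ℕ) (σs : Fin k → (Fin n → Bool)),
    μ (cyl (List.ofFn (fun i => List.ofFn (σs i))).flatten) =
      ∏ i, ENNReal.ofReal (p (σs i))

/-- `φ` is an `n`-block map. -/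
def IsNBlockMap (n : ℕ) (φ : List Bool → List Bool) : Prop :=
  ∀ (σs : List (Fin n → Bool)) (τ : List Bool), τ.length < n →
    φ ((σs.map List.ofFn).flatten ++ τ) = (σs.map (fun f => φ (List.ofFn f))).flatten

/-- The average output/input ratio
`Avg(φ, μ, m) = (1/m) Σ_{σ ∈ 2^m} μ(⟦σ⟧) |φ(σ)|`. -/
noncomputable def Avg (φ : List Bool → List Bool) (μ : Measure (ℕ → Bool))
    (m : ℕ) : ℝ :=
  (1 / m : ℝ) *
    ∑ f : Fin m → Bool, (μ (cyl (List.ofFn f))).toReal * ((φ (List.ofFn f)).length : ℝ)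

/- ## Auxiliary lemmas -/

lemma exists_ofFn {m : ℕ} {l : List Bool} (h : l.length = m) :
    ∃ a : Fin m → Bool, List.ofFn a = l := by
  subst h; exact ⟨l.get, List.ofFn_get l⟩

lemma seg_length (X : ℕ → Bool) (m : ℕ) : (seg X m).length = m := by simp [seg]

lemma seg_getElem (X : ℕ → Bool) (m i : ℕ) (h : i < (seg X m).length) :
    (seg X m)[i] = X i := by
  simp [seg]

lemma mem_cyl_iff (σ : List Bool) (X : ℕ → Bool) :
    X ∈ cyl σ ↔ ∀ i (h : i < σ.length), X i = σ[i] := by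
  constructor
  · intro h i hi
    have h' : seg X σ.length = σ := h
    have h2 : (seg X σ.length)[i]'(by simpa [seg_length]) = X i := seg_getElem ..
    rw [← h2]
    simp only [h']
  · intro h
    apply List.ext_getElem (seg_length X _)
    intro i h1 h2
    rw [seg_getElem]
    exact h i h2

lemma seg_add (X : ℕ → Bool) (s j : ℕ) :
    seg X (s + j) = seg X s ++ (List.ofFn fun i : Fin j => X (s + i)) := by
  apply List.ext_getElem
  · simp [seg]
  · intro i h1 h2
    rw [seg_getElem]
    rcases lt_or_ge i s with h | h
    · rw [List.getElem_append_left (by simpa [seg_length])]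
      rw [seg_getElem]
    · rw [List.getElem_append_right (by simpa [seg_length])]
      simp only [List.getElem_ofFn, seg_length]
      congr 1
      simp [seg_length] at h1
      omega

lemma cyl_measurableSet (σ : List Bool) : MeasurableSet (cyl σ) := by
  have : cyl σ = ⋂ i : Fin σ.length, {X : ℕ → Bool | X i = σ.get i} := by
    ext X
    simp only [Set.mem_iInter, Set.mem_setOf_eq, mem_cyl_iff]
    constructor
    · intro h i
      simpa using h i.1 i.2
    · intro h i hi
      simpa using h ⟨i, hi⟩
  rw [this]
  exact MeasurableSet.iInter fun i =>
    (measurable_pi_apply (i : ℕ)) (measurableSet_singleton _)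

lemma mem_cyl {σ : List Bool} {X : ℕ → Bool} : X ∈ cyl σ ↔ seg X σ.length = σ := Iff.rfl

lemma cyl_eq_iUnion (σ : List Bool) (j : ℕ) :
    cyl σ = ⋃ b : Fin j → Bool, cyl (σ ++ List.ofFn b) := by
  ext X
  simp only [Set.mem_iUnion, mem_cyl, List.length_append, List.length_ofFn]
  constructor
  · intro h
    refine ⟨fun i => X (σ.length + i), ?_⟩
    rw [seg_add, h]
  · intro ⟨b, h⟩
    have := congrArg (List.take σ.length) h
    rwa [seg_add, List.take_left', List.take_left] at this
    exact seg_length X σ.length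

lemma cyl_disjoint (σ : List Bool) (j : ℕ) :
    Pairwise (Function.onFun Disjoint (fun b : Fin j → Bool => cyl (σ ++ List.ofFn b))) := by
  intro b b' hbb
  rw [Function.onFun, Set.disjoint_left]
  intro X h1 h2
  rw [mem_cyl] at h1 h2
  simp only [List.length_append, List.length_ofFn] at h1 h2
  apply hbb
  apply List.ofFn_injective
  exact ((List.append_inj (h1.symm.trans h2) rfl).2)

lemma measure_cyl_sum (μ : Measure (ℕ → Bool)) (σ : List Bool) (j : ℕ) :
    μ (cyl σ) = ∑ b : Fin j → Bool, μ (cyl (σ ++ List.ofFn b)) := by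
  rw [cyl_eq_iUnion σ j,
    measure_iUnion (cyl_disjoint σ j) (fun b => cyl_measurableSet _), tsum_fintype]

section Block

variable {n : ℕ} {p : (Fin n → Bool) → ℝ} {μ : Measure (ℕ → Bool)}
  {φ : List Bool → List Bool}

lemma measure_blocks (hμ : IsNStepBernoulli n p μ) (σs : List (Fin n → Bool)) :
    μ (cyl ((σs.map List.ofFn).flatten)) =
      (σs.map fun f => ENNReal.ofReal (p f)).prod := by
  have h := hμ σs.length σs.get
  have e1 : List.ofFn (fun i => List.ofFn (σs.get i)) = σs.map List.ofFn := by
    have := List.map_ofFn (f := σs.get) (g := List.ofFn)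
    rw [List.ofFn_get] at this
    exact this.symm
  have e2 : (∏ i, ENNReal.ofReal (p (σs.get i)))
      = (σs.map fun f => ENNReal.ofReal (p f)).prod := by
    have := List.map_ofFn (f := σs.get) (g := fun f => ENNReal.ofReal (p f))
    rw [List.ofFn_get] at this
    rw [this, List.prod_ofFn]
    rfl
  rw [e1] at h
  rw [h, e2]

lemma decomp_aux (hn : 1 ≤ n) : ∀ (k : ℕ) (l : List Bool), l.length ≤ k →
    ∃ (σs : List (Fin n → Bool)) (τ : List Bool),
      τ.length < n ∧ l = (σs.map List.ofFn).flatten ++ τ := by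
  intro k
  induction k with
  | zero =>
    intro l hl
    exact ⟨[], l, by omega, by simp⟩
  | succ k ih =>
    intro l hl
    by_cases hm : l.length < n
    · exact ⟨[], l, hm, by simp⟩
    · push_neg at hm
      obtain ⟨a, ha⟩ := exists_ofFn (m := n) (l := l.take n) (by simp [hm])
      obtain ⟨σs, τ, hτ, hd⟩ := ih (l.drop n) (by simp; omega)
      refine ⟨a :: σs, τ, hτ, ?_⟩
      rw [List.map_cons, List.flatten_cons, ha, List.append_assoc, ← hd,
        List.take_append_drop]

lemma decomp (hn : 1 ≤ n) (l : List Bool) :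
    ∃ (σs : List (Fin n → Bool)) (τ : List Bool),
      τ.length < n ∧ l = (σs.map List.ofFn).flatten ++ τ :=
  decomp_aux hn l.length l le_rfl

lemma phi_nil (hφ : IsNBlockMap n φ) {τ : List Bool} (h : τ.length < n) : φ τ = [] := by
  have := hφ [] τ h
  simpa using this

lemma phi_cons (hn : 1 ≤ n) (hφ : IsNBlockMap n φ) (a : Fin n → Bool) (l : List Bool) :
    φ (List.ofFn a ++ l) = φ (List.ofFn a) ++ φ l := by
  obtain ⟨σs, τ, hτ, rfl⟩ := decomp hn l
  have h1 := hφ (a :: σs) τ hτ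
  have h2 := hφ σs τ hτ
  simp only [List.map_cons, List.flatten_cons, List.append_assoc] at h1
  rw [h1, h2]

lemma measure_cons (hn : 1 ≤ n) (hμ : IsNStepBernoulli n p μ)
    (a : Fin n → Bool) (l : List Bool) :
    μ (cyl (List.ofFn a ++ l)) = ENNReal.ofReal (p a) * μ (cyl l) := by
  obtain ⟨σs, τ, hτ, rfl⟩ := decomp hn l
  rw [measure_cyl_sum μ _ (n - τ.length),
    measure_cyl_sum μ ((σs.map List.ofFn).flatten ++ τ) (n - τ.length),
    Finset.mul_sum]
  apply Finset.sum_congr rfl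
  intro b _
  obtain ⟨c, hc⟩ := exists_ofFn (m := n) (l := τ ++ List.ofFn b)
    (by simp [Nat.add_sub_cancel' hτ.le])
  have e2 : (σs.map List.ofFn).flatten ++ τ ++ List.ofFn b =
      ((σs ++ [c]).map List.ofFn).flatten := by
    simp [hc, List.append_assoc]
  have e1 : List.ofFn a ++ ((σs.map List.ofFn).flatten ++ τ) ++ List.ofFn b =
      (((a :: (σs ++ [c])).map List.ofFn).flatten) := by
    simp [hc, List.append_assoc]
  rw [e1, e2, measure_blocks hμ, measure_blocks hμ, List.map_cons, List.prod_cons]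

end Block

lemma sum_cyl_one (μ : Measure (ℕ → Bool)) [IsProbabilityMeasure μ] (m : ℕ) :
    ∑ b : Fin m → Bool, (μ (cyl (List.ofFn b))).toReal = 1 := by
  have h := measure_cyl_sum μ [] m
  have h0 : cyl ([] : List Bool) = Set.univ := by
    ext X; simp [cyl, seg]
  rw [h0, measure_univ] at h
  simp only [List.nil_append] at h
  rw [← ENNReal.toReal_sum (fun b _ => measure_ne_top μ _), ← h, ENNReal.toReal_one]

lemma sum_reindex {M N : ℕ} (h : M = N) (G : List Bool → ℝ) :
    ∑ f : Fin M → Bool, G (List.ofFn f) = ∑ f : Fin N → Bool, G (List.ofFn f) := by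
  subst h; rfl

lemma sum_append (a b : ℕ) (G : List Bool → ℝ) :
    ∑ f : Fin (a + b) → Bool, G (List.ofFn f)
      = ∑ u : Fin a → Bool, ∑ v : Fin b → Bool, G (List.ofFn u ++ List.ofFn v) := by
  have hbij : Function.Bijective
      (fun uv : (Fin a → Bool) × (Fin b → Bool) => Fin.append uv.1 uv.2) := by
    rw [Fintype.bijective_iff_injective_and_card]
    constructor
    · rintro ⟨u, v⟩ ⟨u', v'⟩ h
      have h2 := congrArg List.ofFn h
      simp only [List.ofFn_fin_append] at h2
      obtain ⟨h3, h4⟩ := List.append_inj h2 (by simp)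
      exact Prod.ext (List.ofFn_injective h3) (List.ofFn_injective h4)
    · simp [← pow_add]
  have step : ∑ uv : (Fin a → Bool) × (Fin b → Bool),
      G (List.ofFn uv.1 ++ List.ofFn uv.2) = ∑ f : Fin (a + b) → Bool, G (List.ofFn f) :=
    Fintype.sum_bijective _ hbij
      (fun uv => G (List.ofFn uv.1 ++ List.ofFn uv.2))
      (fun f => G (List.ofFn f))
      (fun uv => by simp only [List.ofFn_fin_append])
  rw [← step]
  exact Fintype.sum_prod_type _

lemma key_sum {n : ℕ} {p : (Fin n → Bool) → ℝ} {μ : Measure (ℕ → Bool)}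
    [IsProbabilityMeasure μ] {φ : List Bool → List Bool}
    (hn : 1 ≤ n) (hp : ∀ f : Fin n → Bool, 0 < p f)
    (hp1 : ∑ f : Fin n → Bool, p f = 1)
    (hμ : IsNStepBernoulli n p μ) (hφ : IsNBlockMap n φ) :
    ∀ q r : ℕ, r < n →
      ∑ f : Fin (n * q + r) → Bool,
          (μ (cyl (List.ofFn f))).toReal * ((φ (List.ofFn f)).length : ℝ)
        = q * ∑ f : Fin n → Bool, p f * ((φ (List.ofFn f)).length : ℝ) := by
  intro q
  induction q with
  | zero =>
    intro r hr
    rw [Finset.sum_eq_zero]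
    · simp
    · intro f _
      rw [phi_nil hφ (by simp; omega)]
      simp
  | succ q ih =>
    intro r hr
    have e0 : ∑ f : Fin (n * (q + 1) + r) → Bool,
        (μ (cyl (List.ofFn f))).toReal * ((φ (List.ofFn f)).length : ℝ)
        = ∑ u : Fin n → Bool, ∑ v : Fin (n * q + r) → Bool,
            (μ (cyl (List.ofFn u ++ List.ofFn v))).toReal
              * ((φ (List.ofFn u ++ List.ofFn v)).length : ℝ) := by
      have h1 := sum_reindex (show n * (q + 1) + r = n + (n * q + r) by ring)
        (fun l => (μ (cyl l)).toReal * ((φ l).length : ℝ))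
      have h2 := sum_append n (n * q + r)
        (fun l => (μ (cyl l)).toReal * ((φ l).length : ℝ))
      exact h1.trans h2
    rw [e0]
    have e1 : ∀ (u : Fin n → Bool) (v : Fin (n * q + r) → Bool),
        (μ (cyl (List.ofFn u ++ List.ofFn v))).toReal
            * ((φ (List.ofFn u ++ List.ofFn v)).length : ℝ)
          = p u * (((φ (List.ofFn u)).length : ℝ) * (μ (cyl (List.ofFn v))).toReal)
            + p u * ((μ (cyl (List.ofFn v))).toReal * ((φ (List.ofFn v)).length : ℝ)) := by
      intro u v
      rw [measure_cons hn hμ, phi_cons hn hφ, ENNReal.toReal_mul,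
        ENNReal.toReal_ofReal (hp u).le, List.length_append]
      push_cast
      ring
    have e2 : ∀ u : Fin n → Bool,
        (∑ v : Fin (n * q + r) → Bool,
          (μ (cyl (List.ofFn u ++ List.ofFn v))).toReal
            * ((φ (List.ofFn u ++ List.ofFn v)).length : ℝ))
        = p u * ((φ (List.ofFn u)).length : ℝ)
          + p u * (q * ∑ f : Fin n → Bool, p f * ((φ (List.ofFn f)).length : ℝ)) := by
      intro u
      rw [Finset.sum_congr rfl fun v _ => e1 u v, Finset.sum_add_distrib,
        ← Finset.mul_sum, ← Finset.mul_sum, ← Finset.mul_sum, sum_cyl_one μ,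
        ih r hr, mul_one]
    rw [Finset.sum_congr rfl fun u _ => e2 u, Finset.sum_add_distrib,
      ← Finset.sum_mul, hp1, one_mul]
    push_cast
    ring

/-- For a positive probability vector `p` on `2^n`, the `n`-step Bernoulli measure
`μ_p`, and a non-trivial `n`-block map `φ`:
`Avg(φ, μ_p, nk) = Avg(φ, μ_p, n)` for all `k ≥ 1`, and
`Rate(φ, μ_p) = limsup_m Avg(φ, μ_p, m) = Avg(φ, μ_p, n) = (1/n) Σ_{σ∈2^n} p(σ)|φ(σ)|`. -/
theorem stmt7 (n : ℕ) (hn : 1 ≤ n) (p : (Fin n → Bool) → ℝ)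
    (hp : ∀ f : Fin n → Bool, 0 < p f) (hp1 : ∑ f : Fin n → Bool, p f = 1)
    (μ : Measure (ℕ → Bool)) [IsProbabilityMeasure μ]
    (hμ : IsNStepBernoulli n p μ)
    (φ : List Bool → List Bool) (hφ : IsNBlockMap n φ)
    (hnt : ∃ f : Fin n → Bool, φ (List.ofFn f) ≠ []) :
    (∀ k : ℕ, 1 ≤ k → Avg φ μ (n * k) = Avg φ μ n) ∧
    limsup (fun m : ℕ => Avg φ μ m) atTop = Avg φ μ n ∧
    Avg φ μ n =
      (1 / n : ℝ) * ∑ f : Fin n → Bool, p f * ((φ (List.ofFn f)).length : ℝ) := by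
  have npos : (0 : ℝ) < n := by exact_mod_cast hn
  set A : ℝ := ∑ f : Fin n → Bool, p f * ((φ (List.ofFn f)).length : ℝ) with hA
  have key := key_sum hn hp hp1 hμ hφ
  have key' : ∀ m : ℕ, ∑ f : Fin m → Bool,
      (μ (cyl (List.ofFn f))).toReal * ((φ (List.ofFn f)).length : ℝ)
      = ((m / n : ℕ) : ℝ) * A := by
    intro m
    have h := key (m / n) (m % n) (Nat.mod_lt m (by omega))
    have e := sum_reindex (show n * (m / n) + m % n = m from Nat.div_add_mod m n)
      (fun l => (μ (cyl l)).toReal * ((φ l).length : ℝ))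
    exact e.symm.trans h
  have avg_eq : ∀ m : ℕ, Avg φ μ m = ((m / n : ℕ) : ℝ) / m * A := by
    intro m
    rw [Avg, key' m]
    ring
  have avgn : Avg φ μ n = 1 / n * A := by
    rw [avg_eq n, Nat.div_self (by omega)]
    push_cast
    ring
  refine ⟨?_, ?_, ?_⟩
  · intro k hk
    have kpos : (0 : ℝ) < k := by exact_mod_cast hk
    rw [avg_eq (n * k), avgn, Nat.mul_div_cancel_left k (by omega)]
    push_cast
    field_simp
  · have h0 : Tendsto (fun m : ℕ => (1 : ℝ) / m) atTop (nhds 0) :=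
      tendsto_const_div_atTop_nhds_zero_nat 1
    have hg : Tendsto (fun m : ℕ => ((m % n : ℕ) : ℝ) / (n * m)) atTop (nhds 0) := by
      apply tendsto_of_tendsto_of_tendsto_of_le_of_le' tendsto_const_nhds h0
      · filter_upwards [eventually_ge_atTop 1] with m hm
        positivity
      · filter_upwards [eventually_ge_atTop 1] with m hm
        have hmn : ((m % n : ℕ) : ℝ) ≤ n := by
          exact_mod_cast (Nat.mod_lt m (by omega)).le
        have hm1 : (0 : ℝ) < m := by exact_mod_cast hm
        rw [div_le_div_iff₀ (by positivity) (by positivity)]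
        nlinarith
    have hq : Tendsto (fun m : ℕ => ((m / n : ℕ) : ℝ) / m) atTop (nhds (1 / n)) := by
      have hsub : Tendsto
          (fun m : ℕ => 1 / (n : ℝ) - ((m % n : ℕ) : ℝ) / (n * m)) atTop
          (nhds (1 / n - 0)) := tendsto_const_nhds.sub hg
      rw [sub_zero] at hsub
      apply hsub.congr'
      filter_upwards [eventually_ge_atTop 1] with m hm
      have hdm : (n : ℝ) * ((m / n : ℕ) : ℝ) + ((m % n : ℕ) : ℝ) = m := by
        exact_mod_cast Nat.div_add_mod m n
      have hm1 : (0 : ℝ) < m := by exact_mod_cast hm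
      field_simp
      nlinarith [hdm]
    have hf : Tendsto (fun m : ℕ => Avg φ μ m) atTop (nhds (1 / n * A)) := by
      have := hq.mul_const A
      exact this.congr fun m => (avg_eq m).symm
    rw [avgn]
    exact hf.limsup_eq
  · exact avgn
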